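/- arXiv:1704.05007 — 2 statements merged into one kernel-verified Lean document; each statement's English description precedes it below -/
import Mathlib

section
/- With α* = SNR·hᴴa/(1+SNR‖h‖²) the minimum of g(α) = |α|²σ² + P‖αh−a‖² equals σ²·aᴴMa·SNR, i.e., P/g(α*) = 1/(aᴴMa), where M = I_L − (SNR/(SNR‖h‖²+1))·h hᴴ. -/
open scoped Matrix
open scoped InnerProductSpace

/-- With α* = SNR·hᴴa/(1+SNR‖h‖²), the minimum of g(α) = |α|²σ² + P‖αh−a‖²
equals P·(aᴴMa), where M = I − (SNR/(1+SNR‖h‖²))·h hᴴ. -/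
theorem stmt11 (L : ℕ) (P σ2 : ℝ) (hP : 0 < P) (hσ : 0 < σ2)
    (h a : Fin L → ℂ) :
    let SNR := P / σ2
    let hna : ℂ := ∑ l, (starRingEnd ℂ) (h l) * a l
    let hn2 : ℝ := ∑ l, ‖h l‖ ^ 2
    let αstar : ℂ := (SNR : ℂ) * hna / (1 + SNR * hn2)
    let M : Matrix (Fin L) (Fin L) ℂ :=
      1 - ((SNR / (1 + SNR * hn2) : ℝ) : ℂ) • Matrix.vecMulVec h (star h)
    ‖αstar‖ ^ 2 * σ2 + P * (∑ l, ‖αstar * h l - a l‖ ^ 2) =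
      P * (star a ⬝ᵥ M.mulVec a).re := by
  intro SNR hna hn2 αstar M
  set s := SNR with hs
  set c : ℝ := 1 + s * hn2 with hc
  have hn2nn : 0 ≤ hn2 := Finset.sum_nonneg fun _ _ => by positivity
  have hspos : 0 < s := div_pos hP hσ
  have hcpos : 0 < c := by positivity
  have hcne : c ≠ 0 := ne_of_gt hcpos
  set B : ℝ := Complex.normSq hna with hB
  set an2 : ℝ := ∑ l, ‖a l‖ ^ 2 with han2
  have hαstar : αstar = (s : ℂ) * hna / (c : ℂ) := by
    simp only [αstar, hc]
    push_cast
    ring_nf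
    rw [hs]
    ring
  have nsq : ∀ z : ℂ, ‖z‖ ^ 2 = Complex.normSq z := fun z => by
    rw [Complex.sq_norm]
  have h1 : ‖αstar‖ ^ 2 = s ^ 2 * B / c ^ 2 := by
    rw [hαstar, norm_div, norm_mul, Complex.norm_real, Complex.norm_real,
      div_pow, mul_pow, nsq, Real.norm_eq_abs, Real.norm_eq_abs,
      abs_of_pos hspos, abs_of_pos hcpos, ← hB]
  have hconj : (starRingEnd ℂ) αstar * hna = ((s * B / c : ℝ) : ℂ) := by
    rw [hαstar]
    simp only [map_div₀, map_mul, Complex.conj_ofReal]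
    rw [div_mul_eq_mul_div, mul_assoc, ← Complex.normSq_eq_conj_mul_self, ← hB]
    push_cast; ring
  have h2 : (∑ l, ‖αstar * h l - a l‖ ^ 2)
      = ‖αstar‖ ^ 2 * hn2 + an2 - 2 * (s * B / c) := by
    have key : ∀ l, ‖αstar * h l - a l‖ ^ 2
        = ‖αstar‖ ^ 2 * ‖h l‖ ^ 2 + ‖a l‖ ^ 2
          - 2 * ((starRingEnd ℂ) αstar * ((starRingEnd ℂ) (h l) * a l)).re := by
      intro l
      simp only [nsq, Complex.normSq_sub, Complex.normSq_mul]
      congr 1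
      rw [← Complex.conj_re (αstar * h l * (starRingEnd ℂ) (a l))]
      congr 1
      simp only [map_mul, Complex.conj_conj]
      ring
    rw [Finset.sum_congr rfl fun l _ => key l]
    have e1 : (∑ l, ((starRingEnd ℂ) αstar * ((starRingEnd ℂ) (h l) * a l)).re)
        = s * B / c := by
      rw [← Complex.re_sum, ← Finset.mul_sum,
        show (∑ l, (starRingEnd ℂ) (h l) * a l) = hna from rfl, hconj,
        Complex.ofReal_re]
    rw [Finset.sum_sub_distrib, Finset.sum_add_distrib, ← Finset.mul_sum, ← Finset.mul_sum,
      e1, ← han2]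
  have hsc : ((SNR / (1 + SNR * hn2) : ℝ) : ℂ) = ((s / c : ℝ) : ℂ) := rfl
  have h3 : star a ⬝ᵥ M.mulVec a = ((an2 - s / c * B : ℝ) : ℂ) := by
    have hM : ∀ i, M.mulVec a i = a i - ((s / c : ℝ) : ℂ) * h i * hna := by
      intro i
      simp only [M, Matrix.mulVec, dotProduct, Matrix.sub_apply, Matrix.one_apply,
        Matrix.smul_apply, Matrix.vecMulVec_apply, smul_eq_mul, sub_mul, ite_mul, one_mul,
        zero_mul, Finset.sum_sub_distrib, Finset.sum_ite_eq, Finset.mem_univ, if_true, hsc]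
      congr 1
      rw [show hna = ∑ l, (starRingEnd ℂ) (h l) * a l from rfl, Finset.mul_sum]
      exact Finset.sum_congr rfl fun j _ => by
        simp only [Pi.star_apply, Complex.star_def]; ring
    simp only [dotProduct, Pi.star_apply, Complex.star_def, hM]
    have expand : ∀ x, (starRingEnd ℂ) (a x) * (a x - ((s / c : ℝ) : ℂ) * h x * hna)
        = ((Complex.normSq (a x) : ℝ) : ℂ)
          - ((s / c : ℝ) : ℂ) * hna * ((starRingEnd ℂ) (a x) * h x) := by
      intro x
      rw [Complex.normSq_eq_conj_mul_self]
      ring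
    rw [Finset.sum_congr rfl fun x _ => expand x, Finset.sum_sub_distrib, ← Finset.mul_sum]
    have e2 : (∑ x, (starRingEnd ℂ) (a x) * h x) = (starRingEnd ℂ) hna := by
      rw [show hna = ∑ l, (starRingEnd ℂ) (h l) * a l from rfl, map_sum]
      exact Finset.sum_congr rfl fun x _ => by rw [map_mul, Complex.conj_conj]; ring
    rw [e2, mul_assoc, Complex.mul_conj, ← hB]
    push_cast [han2]
    simp only [Complex.normSq_eq_norm_sq]
    norm_cast
  rw [h1, h2, h3, Complex.ofReal_re]
  have hPs : s * σ2 = P := div_mul_cancel₀ P (ne_of_gt hσ)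
  rw [← hPs, h1, hc]
  have hcne' : (1 + s * hn2) ≠ 0 := by rw [← hc]; exact hcne
  field_simp
  ring
end

section
/- For any nonzero a ∈ ℤ[i]^L achieving positive computation rate, ‖a‖² ≤ 1 + SNR‖h‖², i.e., the optimal coefficient vector satisfies ‖a_opt‖ ≤ √(1+SNR‖h‖²). -/
open scoped Matrix

/-- Any nonzero Gaussian-integer coefficient vector a achieving positive
computation rate (i.e. aᴴMa < 1) satisfies ‖a‖² ≤ 1 + SNR‖h‖². -/
theorem stmt13 (L : ℕ) (SNR : ℝ) (hSNR : 0 < SNR) (h : Fin L → ℂ)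
    (a : Fin L → ℂ) (ha0 : a ≠ 0)
    (hGauss : ∀ l, ∃ m n : ℤ, a l = (m : ℂ) + (n : ℂ) * Complex.I)
    (hrate :
      (star a ⬝ᵥ
        ((1 : Matrix (Fin L) (Fin L) ℂ) -
          ((SNR / (1 + SNR * ∑ l, ‖h l‖ ^ 2) : ℝ) : ℂ) •
            Matrix.vecMulVec h (star h)).mulVec a).re < 1) :
    ∑ l, ‖a l‖ ^ 2 ≤ 1 + SNR * ∑ l, ‖h l‖ ^ 2 := by
  set N := ∑ l, ‖h l‖ ^ 2 with hN
  set A := ∑ l, ‖a l‖ ^ 2 with hA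
  have hN0 : 0 ≤ N := Finset.sum_nonneg fun _ _ => by positivity
  have hA0 : 0 ≤ A := Finset.sum_nonneg fun _ _ => by positivity
  have hD : 0 < 1 + SNR * N := by positivity
  set c : ℝ := SNR / (1 + SNR * N) with hc
  set z : ℂ := star h ⬝ᵥ a with hz
  have hmv : (Matrix.vecMulVec h (star h)).mulVec a = fun l => h l * z := by
    funext l
    simp [Matrix.mulVec, Matrix.vecMulVec_apply, dotProduct, hz, Finset.mul_sum, mul_assoc]
  have h1 : star a ⬝ᵥ a = (A : ℂ) := by
    simp only [dotProduct, Pi.star_apply, RCLike.star_def, RCLike.conj_mul, hA]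
    push_cast
    rfl
  have h2 : star a ⬝ᵥ (fun l => h l * z) = (‖z‖ ^ 2 : ℝ) := by
    have : star a ⬝ᵥ (fun l => h l * z) = (star a ⬝ᵥ h) * z := by
      simp [dotProduct, Finset.sum_mul, mul_assoc]
    rw [this]
    have : star a ⬝ᵥ h = starRingEnd ℂ z := by
      simp [hz, dotProduct, map_sum, mul_comm]
    rw [this, RCLike.conj_mul]
    norm_cast
  have key : (star a ⬝ᵥ
        ((1 : Matrix (Fin L) (Fin L) ℂ) - (c : ℂ) • Matrix.vecMulVec h (star h)).mulVec a).re
      = A - c * ‖z‖ ^ 2 := by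
    rw [Matrix.sub_mulVec, Matrix.smul_mulVec, hmv, Matrix.one_mulVec,
      dotProduct_sub, dotProduct_smul, h1, smul_eq_mul, h2]
    simp [← Complex.ofReal_pow]
  rw [key] at hrate
  -- Cauchy-Schwarz: ‖z‖^2 ≤ N * A
  have hCS : ‖z‖ ^ 2 ≤ N * A := by
    have h5 : ‖z‖ ≤ ∑ l, ‖h l‖ * ‖a l‖ := by
      refine (norm_sum_le _ _).trans_eq ?_
      exact Finset.sum_congr rfl fun l _ => by simp
    have h6 := Finset.sum_mul_sq_le_sq_mul_sq Finset.univ (fun l => ‖h l‖) (fun l => ‖a l‖)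
    have h7 : ‖z‖ ^ 2 ≤ (∑ l, ‖h l‖ * ‖a l‖) ^ 2 := by
      have : 0 ≤ ‖z‖ := norm_nonneg _
      nlinarith
    exact h7.trans h6
  have hc0 : 0 ≤ c := by positivity
  have h3 : A - c * (N * A) ≤ A - c * ‖z‖ ^ 2 := by nlinarith
  have h4 : A - c * (N * A) = A / (1 + SNR * N) := by
    rw [hc]
    field_simp
    ring
  have h8 : A / (1 + SNR * N) < 1 := by rw [← h4]; exact lt_of_le_of_lt h3 hrate
  exact le_of_lt ((div_lt_one hD).mp h8)
end
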